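/- Let b be a finite Blaschke product in E(φ), K = ker[T_φ^*, T_φ], and suppose T_φ(bK) ⊆ bH^2. Then T_φ(bk) = b·T_φ k for every k ∈ K. -/

import Mathlib

open MeasureTheory Complex Submodule
noncomputable section
instance fact2pi : Fact (0 < 2 * Real.pi) := ⟨by positivity⟩
instance factTop1 : Fact ((1:ENNReal) ≤ (⊤:ENNReal)) := ⟨le_top⟩
/-- the circle group -/
abbrev Tc := AddCircle (2 * Real.pi)
/-- normalized Haar measure on the circle -/
abbrev muh : Measure Tc := AddCircle.haarAddCircle
/-- L² of the circle -/
abbrev L2 := Lp ℂ 2 muh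
/-- L^∞ of the circle -/
abbrev Linf := Lp ℂ ⊤ muh

/-- The Hardy space `H²` as a closed subspace of `L²` of the circle. -/
def H2 : Submodule ℂ L2 :=
  (span ℂ (Set.range fun n : ℕ => (fourierLp 2 (n : ℤ) : L2))).topologicalClosure

theorem isClosed_H2 : IsClosed (H2 : Set L2) := Submodule.isClosed_topologicalClosure _
instance : CompleteSpace H2 := IsClosed.completeSpace_coe (hs := isClosed_H2)

theorem memLp2_mul (φ : Linf) (g : L2) :
    MemLp ((φ : Tc → ℂ) • (g : Tc → ℂ)) 2 muh :=
  MemLp.smul (Lp.memLp g) (Lp.memLp φ)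

/-- multiplication of an `L∞` function and an `L²` function, as an element of `L²`. -/
def mulL2 (φ : Linf) (g : L2) : L2 := (memLp2_mul φ g).toLp _

theorem mulL2_add (φ : Linf) (g h : L2) : mulL2 φ (g + h) = mulL2 φ g + mulL2 φ h := by
  simp only [mulL2]
  rw [← MemLp.toLp_add]
  apply MemLp.toLp_congr
  filter_upwards [Lp.coeFn_add g h] with x hx
  simp only [Pi.mul_apply, Pi.smul_apply, smul_eq_mul, hx, Pi.add_apply]
  ring

theorem mulL2_smul (φ : Linf) (c : ℂ) (g : L2) : mulL2 φ (c • g) = c • mulL2 φ g := by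
  simp only [mulL2]
  rw [← MemLp.toLp_const_smul]
  apply MemLp.toLp_congr
  filter_upwards [Lp.coeFn_smul c g] with x hx
  simp only [Pi.mul_apply, Pi.smul_apply, smul_eq_mul, hx]
  ring

theorem mulL2_norm (φ : Linf) (g : L2) : ‖mulL2 φ g‖ ≤ ‖φ‖ * ‖g‖ := by
  rw [mulL2, Lp.norm_toLp]
  have h : eLpNorm ((φ : Tc → ℂ) • (g : Tc → ℂ)) 2 muh ≤
      eLpNorm (φ : Tc → ℂ) ⊤ muh * eLpNorm (g : Tc → ℂ) 2 muh :=
    eLpNorm_smul_le_mul_eLpNorm (Lp.aestronglyMeasurable g) (Lp.aestronglyMeasurable φ)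
  calc (eLpNorm ((φ : Tc → ℂ) • (g : Tc → ℂ)) 2 muh).toReal
      ≤ (eLpNorm (φ : Tc → ℂ) ⊤ muh * eLpNorm (g : Tc → ℂ) 2 muh).toReal := by
        apply ENNReal.toReal_mono
        · exact ENNReal.mul_ne_top (Lp.eLpNorm_ne_top φ) (Lp.eLpNorm_ne_top g)
        · exact h
    _ = ‖φ‖ * ‖g‖ := by
        rw [ENNReal.toReal_mul, Lp.norm_def, Lp.norm_def]

/-- Multiplication by an `L^∞` function as a continuous linear operator on `L²`. -/
def Mmul (φ : Linf) : L2 →L[ℂ] L2 :=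
  LinearMap.mkContinuous
    { toFun := mulL2 φ
      map_add' := mulL2_add φ
      map_smul' := mulL2_smul φ } ‖φ‖ (mulL2_norm φ)

/-- the orthogonal projection `P : L² → H²`. -/
abbrev P2 : L2 →L[ℂ] ↥H2 := orthogonalProjection H2

/-- The Toeplitz operator with symbol `φ ∈ L^∞`, acting on `H²`: `T_φ g = P (φ g)`. -/
def Toep (φ : Linf) : ↥H2 →L[ℂ] ↥H2 := P2 ∘L (Mmul φ) ∘L H2.subtypeL

/-- The Toeplitz operator, viewed as a map `L² → L²` (useful to avoid coercions). -/
def TopL (φ : Linf) : L2 →L[ℂ] L2 := H2.subtypeL ∘L P2 ∘L Mmul φ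

theorem memLpTop_mul (φ ψ : Linf) : MemLp ((φ : Tc → ℂ) • (ψ : Tc → ℂ)) ⊤ muh :=
  MemLp.smul (Lp.memLp ψ) (Lp.memLp φ)

/-- `L^∞` is closed under products; we register this as a `Mul` instance. -/
instance : Mul Linf := ⟨fun φ ψ => (memLpTop_mul φ ψ).toLp _⟩

/-- the constant function `1` in `L^∞`. -/
instance : One Linf := ⟨(memLp_top_const (1 : ℂ)).toLp _⟩

/-- the embedding of `L^∞` into `L²` (the measure is finite). -/
def toL2 (φ : Linf) : L2 := ((Lp.memLp φ).mono_exponent le_top).toLp _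

/-- `H^∞`: the essentially bounded functions lying in the Hardy space. -/
def Hinf : Set Linf := {φ | toL2 φ ∈ H2}

/-- pointwise complex conjugation on `L²`. -/
def conjL2 (f : L2) : L2 :=
  ((Complex.conjCLE.toContinuousLinearMap).comp_memLp' (Lp.memLp f)).toLp _

/-- pointwise complex conjugation on `L^∞`. -/
def conjLinf (φ : Linf) : Linf :=
  ((Complex.conjCLE.toContinuousLinearMap).comp_memLp' (Lp.memLp φ)).toLp _

/-- composition with `z ↦ z⁻¹` (i.e. `x ↦ -x` on the additive circle) on `L²`. -/
def compNegL2 : L2 →ₗᵢ[ℂ] L2 :=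
  Lp.compMeasurePreservingₗᵢ ℂ (fun x : Tc => -x) (Measure.measurePreserving_neg muh)

/-- composition with `z ↦ z⁻¹` on `L^∞`. -/
def compNegLinf (φ : Linf) : Linf :=
  Lp.compMeasurePreserving (fun x : Tc => -x) (Measure.measurePreserving_neg muh) φ

/-- `φ̃(z) = conj (φ (z̄))`. -/
def tildeL (φ : Linf) : Linf := conjLinf (compNegLinf φ)

/-- `f̃(z) = conj (f (z̄))` on `L²`. -/
def tilde2 (f : L2) : L2 := conjL2 (compNegL2 f)

/-- the unitary `J` on `L²`: `(J f)(z) = z̄ f(z̄)`. -/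
def Jop : L2 →L[ℂ] L2 := (Mmul (fourierLp ⊤ (-1))) ∘L compNegL2.toContinuousLinearMap

/-- the projection onto `(H²)^⊥`. -/
def PperpL : L2 →L[ℂ] L2 := ContinuousLinearMap.id ℂ L2 - H2.subtypeL ∘L P2

/-- The Hankel operator with symbol `φ`: `H_φ g = J P^⊥ (φ g)`. -/
def Hank (φ : Linf) : ↥H2 →L[ℂ] L2 := Jop ∘L PperpL ∘L (Mmul φ) ∘L H2.subtypeL

/-- the self-commutator `[T^*, T] = T^*T - TT^*`. -/
def selfCommOp {H : Type*} [NormedAddCommGroup H] [InnerProductSpace ℂ H] [CompleteSpace H]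
    (T : H →L[ℂ] H) : H →L[ℂ] H :=
  ContinuousLinearMap.adjoint T ∘L T - T ∘L ContinuousLinearMap.adjoint T

/-- hyponormality of a Hilbert-space operator. -/
def IsHyponormalOp {H : Type*} [NormedAddCommGroup H] [InnerProductSpace ℂ H] [CompleteSpace H]
    (T : H →L[ℂ] H) : Prop := (selfCommOp T).IsPositive

/-- normality of a Hilbert-space operator. -/
def IsNormalOp {H : Type*} [NormedAddCommGroup H] [InnerProductSpace ℂ H] [CompleteSpace H]
    (T : H →L[ℂ] H) : Prop := selfCommOp T = 0

/-- finite rank operator. -/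
def FiniteRankOp {H : Type*} [NormedAddCommGroup H] [InnerProductSpace ℂ H]
    (T : H →L[ℂ] H) : Prop := FiniteDimensional ℂ ↥(LinearMap.range (T : H →ₗ[ℂ] H))

/-- `φ` is of bounded type: a quotient of two `H^∞` functions. -/
def BoundedType (φ : Linf) : Prop :=
  ∃ ψ₁ ψ₂ : Linf, ψ₁ ∈ Hinf ∧ ψ₂ ∈ Hinf ∧ (∀ᵐ x ∂muh, (ψ₂ : Tc → ℂ) x ≠ 0) ∧
    (∀ᵐ x ∂muh, (φ : Tc → ℂ) x = (ψ₁ : Tc → ℂ) x / (ψ₂ : Tc → ℂ) x)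

/-- scalar inner function. -/
def IsInner (θ : Linf) : Prop := θ ∈ Hinf ∧ ∀ᵐ x ∂muh, ‖(θ : Tc → ℂ) x‖ = 1

/-- constant function in `L^∞`. -/
def IsConstLinf (θ : Linf) : Prop := ∃ c : ℂ, θ = c • (1 : Linf)

/-- the boundary function `z = e^{ix}` on the circle. -/
def zfun : Tc → ℂ := fun x => fourier 1 x

/-- finite Blaschke product. -/
def IsFiniteBlaschke (θ : Linf) : Prop :=
  ∃ (c : ℂ) (N : ℕ) (α : Fin N → ℂ), ‖c‖ = 1 ∧ (∀ i, ‖α i‖ < 1) ∧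
    ∀ᵐ x ∂muh, (θ : Tc → ℂ) x =
      c * ∏ i, (zfun x - α i) / (1 - (starRingEnd ℂ (α i)) * zfun x)

/-- divisibility of inner functions: `θ` divides `θ'`. -/
def InnerDivides (θ θ' : Linf) : Prop := ∃ ω : Linf, IsInner ω ∧ θ' = θ * ω

/-- evaluation of an `H²` function inside the disk, via its Taylor (Fourier) coefficients. -/
def evalDisk (f : L2) (α : ℂ) : ℂ := ∑' k : ℕ, fourierCoeff (f : Tc → ℂ) (k : ℤ) * α ^ k

/-- the model space `H_θ = H² ⊖ θH²`. -/
def ModelSpace (θ : Linf) : Submodule ℂ L2 := H2 ⊓ (Submodule.map (Mmul θ : L2 →ₗ[ℂ] L2) H2)ᗮ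

/-- outer function: the closed span of its (analytic) polynomial multiples is all of `H²`. -/
def IsOuter (h : L2) : Prop :=
  (span ℂ (Set.range fun n : ℕ => mulL2 (fourierLp ⊤ (n : ℤ)) h)).topologicalClosure = H2

/-- `h` coincides with an `H^∞` function which is invertible in `H^∞`. -/
def InvertibleHinf (h : L2) : Prop :=
  ∃ u v : Linf, toL2 u = h ∧ u ∈ Hinf ∧ v ∈ Hinf ∧ u * v = 1

/-- the set `E(φ)` appearing in Cowen's hyponormality criterion. -/
def Ecal (φ : Linf) : Set Linf :=
  {k | k ∈ Hinf ∧ ‖k‖ ≤ 1 ∧ φ - k * conjLinf φ ∈ Hinf}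

theorem isClosed_modelSpace (θ : Linf) : IsClosed ((ModelSpace θ : Set L2)) := by
  rw [ModelSpace, Submodule.coe_inf]
  exact isClosed_H2.inter (Submodule.isClosed_orthogonal _)

instance (θ : Linf) : CompleteSpace (ModelSpace θ) :=
  IsClosed.completeSpace_coe (hs := isClosed_modelSpace θ)

/-- the orthogonal projection of `L²` onto the model space `H_θ`, as an endomorphism of `L²`. -/
def Pmodel (θ : Linf) : L2 →L[ℂ] L2 :=
  (ModelSpace θ).subtypeL ∘L orthogonalProjection (ModelSpace θ)


section Aux

theorem coeFn_mulL2 (φ : Linf) (g : L2) :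
    (mulL2 φ g : Tc → ℂ) =ᵐ[muh] (φ : Tc → ℂ) • (g : Tc → ℂ) :=
  (memLp2_mul φ g).coeFn_toLp

theorem coeFn_toL2 (φ : Linf) : (toL2 φ : Tc → ℂ) =ᵐ[muh] (φ : Tc → ℂ) :=
  ((Lp.memLp φ).mono_exponent le_top).coeFn_toLp

theorem fourierLp_mem_H2 (n : ℕ) : (fourierLp 2 (n : ℤ) : L2) ∈ H2 :=
  Submodule.le_topologicalClosure _ (subset_span ⟨n, rfl⟩)

theorem mulL2_fourierLp_fourierLp (m k : ℤ) :
    mulL2 (fourierLp ⊤ m) (fourierLp 2 k) = (fourierLp 2 (m + k) : L2) := by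
  apply Lp.ext
  filter_upwards [coeFn_mulL2 (fourierLp ⊤ m) (fourierLp 2 k), coeFn_fourierLp ⊤ m,
    coeFn_fourierLp 2 k, coeFn_fourierLp 2 (m + k)] with x h1 h2 h3 h4
  rw [h1, h4]
  simp only [Pi.smul_apply, smul_eq_mul, Pi.mul_apply]
  rw [h2, h3, ← fourier_add]

theorem mulL2_fourier_mem_H2 (n : ℕ) (f : L2) (hf : f ∈ H2) :
    mulL2 (fourierLp ⊤ (n : ℤ)) f ∈ H2 := by
  have hle : H2 ≤ H2.comap ((Mmul (fourierLp ⊤ (n : ℤ))) : L2 →ₗ[ℂ] L2) := by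
    apply Submodule.topologicalClosure_minimal
    · rw [span_le]
      rintro _ ⟨k, rfl⟩
      simp only [SetLike.mem_coe, Submodule.mem_comap, ContinuousLinearMap.coe_coe]
      show mulL2 (fourierLp ⊤ (n : ℤ)) (fourierLp 2 (k : ℤ)) ∈ H2
      rw [mulL2_fourierLp_fourierLp]
      have hnk : ((n : ℤ) + (k : ℤ)) = ((n + k : ℕ) : ℤ) := by push_cast; ring
      rw [hnk]
      exact fourierLp_mem_H2 (n + k)
    · exact isClosed_H2.preimage (Mmul _).continuous
  exact hle hf

theorem mulL2_fourier_comm (b : Linf) (n : ℕ) :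
    mulL2 b (fourierLp 2 (n : ℤ)) = mulL2 (fourierLp ⊤ (n : ℤ)) (toL2 b) := by
  apply Lp.ext
  filter_upwards [coeFn_mulL2 b (fourierLp 2 (n : ℤ)),
    coeFn_mulL2 (fourierLp ⊤ (n : ℤ)) (toL2 b), coeFn_fourierLp 2 (n : ℤ),
    coeFn_fourierLp ⊤ (n : ℤ), coeFn_toL2 b] with x h1 h2 h3 h4 h5
  rw [h1, h2]
  simp only [Pi.smul_apply, smul_eq_mul, Pi.mul_apply]
  rw [h3, h4, h5, mul_comm]

theorem Hinf_mulL2_mem_H2 (b : Linf) (hb : toL2 b ∈ H2) (f : L2) (hf : f ∈ H2) :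
    mulL2 b f ∈ H2 := by
  have hle : H2 ≤ H2.comap ((Mmul b) : L2 →ₗ[ℂ] L2) := by
    apply Submodule.topologicalClosure_minimal
    · rw [span_le]
      rintro _ ⟨k, rfl⟩
      simp only [SetLike.mem_coe, Submodule.mem_comap, ContinuousLinearMap.coe_coe]
      show mulL2 b (fourierLp 2 (k : ℤ)) ∈ H2
      rw [mulL2_fourier_comm]
      exact mulL2_fourier_mem_H2 k (toL2 b) hb
    · exact isClosed_H2.preimage (Mmul _).continuous
  exact hle hf

theorem blaschke_norm_one {b : Linf} (hb : IsFiniteBlaschke b) :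
    ∀ᵐ x ∂muh, ‖(b : Tc → ℂ) x‖ = 1 := by
  obtain ⟨c, N, α, hc, hα, hae⟩ := hb
  filter_upwards [hae] with x hx
  rw [hx, norm_mul, hc, one_mul, norm_prod, Finset.prod_eq_one]
  rintro i -
  have hz : ‖zfun x‖ = 1 := Circle.norm_coe _
  have habs : ‖zfun x‖ = 1 := hz
  have hz2 : zfun x * (starRingEnd ℂ) (zfun x) = 1 := by
    rw [Complex.mul_conj, Complex.normSq_eq_norm_sq, habs]; norm_num
  have hne : ‖(1 : ℂ) - (starRingEnd ℂ) (α i) * zfun x‖ ≠ 0 := by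
    rw [norm_ne_zero_iff]
    intro h
    have h1 : (starRingEnd ℂ) (α i) * zfun x = 1 := by linear_combination -h
    have h2 : ‖(starRingEnd ℂ) (α i) * zfun x‖ = 1 := by rw [h1, norm_one]
    rw [norm_mul, RCLike.norm_conj, hz, mul_one] at h2
    exact absurd h2 (ne_of_lt (hα i))
  have heq : ‖zfun x - α i‖ = ‖(1 : ℂ) - (starRingEnd ℂ) (α i) * zfun x‖ := by
    calc ‖zfun x - α i‖ = ‖(starRingEnd ℂ) (zfun x) * (zfun x - α i)‖ := by
          rw [norm_mul, RCLike.norm_conj, hz, one_mul]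
      _ = ‖(starRingEnd ℂ) ((1 : ℂ) - (starRingEnd ℂ) (α i) * zfun x)‖ := by
          congr 1
          simp only [map_sub, map_mul, map_one, Complex.conj_conj]
          linear_combination hz2
      _ = ‖(1 : ℂ) - (starRingEnd ℂ) (α i) * zfun x‖ := RCLike.norm_conj _
  rw [norm_div, heq, div_self hne]

theorem inner_mulL2_mulL2 {b : Linf} (hb : ∀ᵐ x ∂muh, ‖(b : Tc → ℂ) x‖ = 1) (f g : L2) :
    (inner ℂ (mulL2 b f) (mulL2 b g) : ℂ) = inner ℂ f g := by
  rw [MeasureTheory.L2.inner_def, MeasureTheory.L2.inner_def]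
  apply integral_congr_ae
  filter_upwards [coeFn_mulL2 b f, coeFn_mulL2 b g, hb] with x h1 h2 h3
  rw [h1, h2]
  simp only [Pi.smul_apply, smul_eq_mul, Pi.mul_apply, RCLike.inner_apply, map_mul]
  have habs : ‖(b : Tc → ℂ) x‖ = 1 := h3
  have hb1 : (b : Tc → ℂ) x * (starRingEnd ℂ) ((b : Tc → ℂ) x) = 1 := by
    rw [Complex.mul_conj, Complex.normSq_eq_norm_sq, habs]; norm_num
  linear_combination ((starRingEnd ℂ) ((f : Tc → ℂ) x) * (g : Tc → ℂ) x) * hb1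

theorem inner_mul_mulL2_mulL2 {b : Linf} (hb : ∀ᵐ x ∂muh, ‖(b : Tc → ℂ) x‖ = 1)
    (φ : Linf) (f g : L2) :
    (inner ℂ (mulL2 φ (mulL2 b f)) (mulL2 b g) : ℂ) = inner ℂ (mulL2 φ f) g := by
  rw [MeasureTheory.L2.inner_def, MeasureTheory.L2.inner_def]
  apply integral_congr_ae
  filter_upwards [coeFn_mulL2 φ (mulL2 b f), coeFn_mulL2 b f, coeFn_mulL2 b g,
    coeFn_mulL2 φ f, hb] with x h1 h2 h3 h4 h5
  rw [h1, h3, h4]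
  simp only [Pi.smul_apply, smul_eq_mul, Pi.mul_apply, RCLike.inner_apply, map_mul]
  rw [h2]
  simp only [Pi.smul_apply, smul_eq_mul, Pi.mul_apply, map_mul]
  have habs : ‖(b : Tc → ℂ) x‖ = 1 := h5
  have hb1 : (b : Tc → ℂ) x * (starRingEnd ℂ) ((b : Tc → ℂ) x) = 1 := by
    rw [Complex.mul_conj, Complex.normSq_eq_norm_sq, habs]; norm_num
  linear_combination ((starRingEnd ℂ) ((φ : Tc → ℂ) x) * (starRingEnd ℂ) ((f : Tc → ℂ) x) *
    (g : Tc → ℂ) x) * hb1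

end Aux

/-- if `b ∈ E(φ)` is a finite Blaschke product, `K = ker [T_φ*, T_φ]` and
`T_φ(bK) ⊆ bH²`, then `T_φ(bk) = b ⋅ T_φ k` for every `k ∈ K`. -/
theorem toeplitz_commutes_with_blaschke_on_kernel
    (φ b : Linf) (hb₁ : IsFiniteBlaschke b) (hb₂ : b ∈ Ecal φ)
    (hsub : ∀ x : ↥H2, selfCommOp (Toep φ) x = 0 →
      ∃ g : ↥H2, TopL φ (mulL2 b (x : L2)) = mulL2 b (g : L2)) :
    ∀ x : ↥H2, selfCommOp (Toep φ) x = 0 →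
      TopL φ (mulL2 b (x : L2)) = mulL2 b ((Toep φ x : ↥H2) : L2) := by 
  intro x hx
  obtain ⟨g, hg⟩ := hsub x hx
  have hbH2 : toL2 b ∈ H2 := hb₂.1
  have hbn := blaschke_norm_one hb₁
  set k₁ : ↥H2 := Toep φ x with hk₁
  set h : ↥H2 := g - k₁ with hh
  have hcoe : ((h : L2)) = (g : L2) - (k₁ : L2) := rfl
  have hmul_sub : mulL2 b ((h : L2)) = mulL2 b (g : L2) - mulL2 b ((k₁ : L2)) := by
    rw [hcoe]; exact map_sub (Mmul b) (g : L2) (k₁ : L2)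
  have hdiff : TopL φ (mulL2 b (x : L2)) - mulL2 b ((k₁ : L2)) = mulL2 b ((h : L2)) := by
    rw [hg, hmul_sub]
  have hmem : mulL2 b ((h : L2)) ∈ H2 := Hinf_mulL2_mem_H2 b hbH2 _ h.2
  set m : ↥H2 := ⟨mulL2 b ((h : L2)), hmem⟩ with hm
  have hTop : TopL φ (mulL2 b (x : L2)) = ((P2 (mulL2 φ (mulL2 b (x : L2))) : ↥H2) : L2) := rfl
  have hk₁' : (k₁ : L2) = ((P2 (mulL2 φ (x : L2)) : ↥H2) : L2) := rfl
  have t1 : (inner ℂ (TopL φ (mulL2 b (x : L2))) ((m : L2)) : ℂ)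
      = inner ℂ (mulL2 φ (x : L2)) ((h : L2)) := by
    rw [hTop, ← Submodule.coe_inner, inner_orthogonalProjectionOnto_eq_of_mem_right]
    exact inner_mul_mulL2_mulL2 hbn φ (x : L2) ((h : L2))
  have t2 : (inner ℂ (mulL2 b ((k₁ : L2))) ((m : L2)) : ℂ)
      = inner ℂ (mulL2 φ (x : L2)) ((h : L2)) := by
    have e1 : (inner ℂ (mulL2 b ((k₁ : L2))) ((m : L2)) : ℂ) = inner ℂ ((k₁ : L2)) ((h : L2)) :=
      inner_mulL2_mulL2 hbn _ _
    rw [e1, hk₁', ← Submodule.coe_inner, inner_orthogonalProjectionOnto_eq_of_mem_right]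
  have hzero : (inner ℂ ((m : L2)) ((m : L2)) : ℂ) = 0 := by
    have : ((m : L2)) = TopL φ (mulL2 b (x : L2)) - mulL2 b ((k₁ : L2)) := hdiff.symm
    calc (inner ℂ ((m : L2)) ((m : L2)) : ℂ)
        = inner ℂ (TopL φ (mulL2 b (x : L2)) - mulL2 b ((k₁ : L2))) ((m : L2)) := by rw [← this]
      _ = inner ℂ (TopL φ (mulL2 b (x : L2))) ((m : L2)) - inner ℂ (mulL2 b ((k₁ : L2))) ((m : L2)) :=
          inner_sub_left _ _ _
      _ = 0 := by rw [t1, t2, sub_self]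
  have hm0 : ((m : L2)) = 0 := inner_self_eq_zero.mp hzero
  have : TopL φ (mulL2 b (x : L2)) - mulL2 b ((k₁ : L2)) = 0 := by
    rw [hdiff]; exact hm0
  exact sub_eq_zero.mp this
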